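/- Let b, ε be real numbers and m ≥ 1 an integer. Let g be a formal power series in one variable w over ℝ with constant coefficient 1 satisfying g² = 1 − b²·w². Then the coefficient of w^{2m+2} in the power series (1 − bεw)^{2m}·g equals −2·T_c, where T_c := (b^{2m+2}/2)·Σ_{n=1}^{m+1} ε^{2m−2n+2}·(2m)!/(n!·(2m−2n+2)!·(n−1)!·2^{2n−1}). -/

import Mathlib

open PowerSeries

/-- The residue at infinity of (x−bε)^{2m}√(x²−b²) determines the critical
temperature: writing w = 1/x and letting g be the power series with constant
coefficient 1 and g² = 1 − b²w², the coefficient of w^{2m+2} in (1 − bεw)^{2m}·g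
equals −2·T_c with T_c = (b^{2m+2}/2)·Σ_{n=1}^{m+1}
ε^{2m−2n+2}(2m)!/(n!(2m−2n+2)!(n−1)!2^{2n−1}). -/
theorem critical_temperature (b ε : ℝ) (m : ℕ) (hm : 1 ≤ m)
    (g : PowerSeries ℝ) (hg0 : constantCoeff g = 1)
    (hg : g ^ 2 = 1 - PowerSeries.C (b ^ 2) * PowerSeries.X ^ 2) :
    coeff (2 * m + 2)
        ((1 - PowerSeries.C (b * ε) * PowerSeries.X) ^ (2 * m) * g)
      = -2 * (b ^ (2 * m + 2) / 2 *
          ∑ n ∈ Finset.Icc 1 (m + 1),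
            ε ^ (2 * m + 2 - 2 * n) * (Nat.factorial (2 * m) : ℝ) /
              ((Nat.factorial n : ℝ) * (Nat.factorial (2 * m + 2 - 2 * n) : ℝ) *
                (Nat.factorial (n - 1) : ℝ) * 2 ^ (2 * n - 1))) := by
  -- Step 1: the differential equation (1 - b²X²)·g' = -b²·X·g
  have key : (1 - PowerSeries.C (b^2) * X^2) * (d⁄dX ℝ g)
      = PowerSeries.C (-b^2) * X * g := by
    have hd := congrArg (d⁄dX ℝ) hg
    rw [map_sub, Derivation.map_one_eq_zero, Derivation.leibniz, derivative_C,
      Derivation.leibniz_pow, Derivation.leibniz_pow, derivative_X] at hd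
    simp only [smul_eq_mul, smul_zero, zero_add, zero_sub, mul_one, pow_one,
      Nat.cast_ofNat] at hd
    have h1 : g * (d⁄dX ℝ g) = PowerSeries.C (-b^2) * X := by
      have h2 : (2 : PowerSeries ℝ) * (g * d⁄dX ℝ g)
          = 2 * (PowerSeries.C (-b^2) * X) := by
        rw [map_neg]; linear_combination hd
      have h3 : (2 : PowerSeries ℝ) ≠ 0 := by
        intro h
        have h4 := congrArg (constantCoeff) h
        rw [map_ofNat, map_zero] at h4
        norm_num at h4
      exact mul_left_cancel₀ h3 h2
    calc (1 - PowerSeries.C (b^2) * X^2) * (d⁄dX ℝ g)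
        = g * (g * d⁄dX ℝ g) := by rw [← hg]; ring
      _ = PowerSeries.C (-b^2) * X * g := by rw [h1]; ring
  -- Step 2: the coefficient recurrence
  have hrec : ∀ n : ℕ, ((n:ℝ)+2) * coeff (n+2) g
      = b^2 * ((n:ℝ)-1) * coeff n g := by
    intro n
    have h := congrArg (coeff (n+1)) key
    rw [sub_mul, one_mul, map_sub, mul_assoc, coeff_C_mul, coeff_X_pow_mul',
      mul_assoc, coeff_C_mul, coeff_succ_X_mul, coeff_derivative] at h
    rcases n with _ | k
    · simp only [Nat.cast_zero] at h ⊢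
      norm_num at h ⊢
      linarith [h]
    · rw [if_pos (by omega : 2 ≤ k + 1 + 1)] at h
      have he : k + 1 + 1 - 2 = k := by omega
      rw [he, coeff_derivative] at h
      push_cast at h ⊢
      nlinarith [h]
  have hg00 : coeff 0 g = 1 := by rw [coeff_zero_eq_constantCoeff, hg0]
  -- Step 3: odd coefficients vanish
  have aodd : ∀ k : ℕ, coeff (2*k+1) g = 0 := by
    have h1 : coeff 1 g = 0 := by
      have h := congrArg (coeff 1) hg
      rw [pow_two, coeff_mul, Finset.Nat.sum_antidiagonal_eq_sum_range_succ_mk] at h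
      simp only [Finset.sum_range_succ, Finset.sum_range_zero, zero_add] at h
      rw [map_sub, coeff_one, coeff_C_mul, coeff_X_pow] at h
      norm_num at h
      rw [hg0] at h
      linarith
    intro k
    induction k with
    | zero => simpa using h1
    | succ k ih =>
      have h := hrec (2*k+1)
      rw [ih] at h
      have he : 2*k+1+2 = 2*(k+1)+1 := by omega
      rw [he] at h
      have hne : ((2*k+1:ℕ):ℝ) + 2 ≠ 0 := by positivity
      have h' : ((2*k+1:ℕ):ℝ)+2 = 0 ∨ coeff (2*(k+1)+1) g = 0 := by
        apply mul_eq_zero.mp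
        rw [h]; ring
      exact h'.resolve_left hne
  -- Step 4: even coefficients closed form
  have aeven : ∀ k : ℕ, 1 ≤ k → coeff (2*k) g
      = -(b^(2*k)) * (Nat.factorial (2*k-2) : ℝ) /
          ((Nat.factorial (k-1) : ℝ) * (Nat.factorial k : ℝ) * 2^(2*k-1)) := by
    intro k hk
    induction k with
    | zero => omega
    | succ k ih =>
      rcases Nat.eq_or_lt_of_le hk with h1 | h1
      · have hk0 : k = 0 := by omega
        subst hk0
        have h := hrec 0
        rw [hg00] at h
        norm_num [Nat.factorial] at h ⊢
        linarith
      · have hk1 : 1 ≤ k := by omega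
        have ih' := ih hk1
        have h := hrec (2*k)
        have he : 2*k+2 = 2*(k+1) := by omega
        rw [he, ih'] at h
        have hf1 : (Nat.factorial (2*(k+1)-2) : ℝ)
            = (2*(k:ℝ))*(2*(k:ℝ)-1)*(Nat.factorial (2*k-2) : ℝ) := by
          obtain ⟨l, rfl⟩ : ∃ l, k = l + 1 := ⟨k-1, by omega⟩
          have e1 : 2*(l+1+1)-2 = (2*l+1)+1 := by omega
          have e2 : 2*(l+1)-2 = 2*l := by omega
          rw [e1, e2, Nat.factorial_succ, Nat.factorial_succ]
          push_cast
          ring_nf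
        have hf2 : (Nat.factorial (k+1) : ℝ) = ((k:ℝ)+1) * (Nat.factorial k : ℝ) := by
          rw [Nat.factorial_succ]; push_cast; ring
        have e3 : (k+1)-1 = k := rfl
        have hp : (2:ℝ)^(2*(k+1)-1) = 4 * 2^(2*k-1) := by
          have e : 2*(k+1)-1 = (2*k-1)+2 := by omega
          rw [e, pow_add]; ring
        have hb : (b:ℝ)^(2*(k+1)) = b^2 * b^(2*k) := by
          have e : 2*(k+1) = 2*k+2 := by omega
          rw [e, pow_add]; ring
        have hden : ((2*(k:ℝ))+2) ≠ 0 := by positivity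
        have hkf : (Nat.factorial k : ℝ) ≠ 0 := Nat.cast_ne_zero.mpr (Nat.factorial_ne_zero k)
        have hkf1 : (Nat.factorial (k-1) : ℝ) ≠ 0 :=
          Nat.cast_ne_zero.mpr (Nat.factorial_ne_zero _)
        have hkk : (Nat.factorial k : ℝ) = (k:ℝ) * (Nat.factorial (k-1) : ℝ) := by
          obtain ⟨l, rfl⟩ : ∃ l, k = l + 1 := ⟨k-1, by omega⟩
          rw [Nat.factorial_succ]; push_cast; ring
        have hpw : (2:ℝ)^(2*k-1) ≠ 0 := by positivity
        apply mul_left_cancel₀ hden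
        push_cast at h
        rw [hkk] at h
        rw [hf1, hf2, hp, hb, e3, hkk, h]
        have hk0 : (k:ℝ) ≠ 0 := by
          exact Nat.cast_ne_zero.mpr (by omega)
        field_simp
        ring
  -- Step 5: coefficients of (1 - bεX)^(2m)
  have cP : ∀ j : ℕ, coeff j ((1 - PowerSeries.C (b*ε) * X)^(2*m))
      = (-(b*ε))^j * (Nat.choose (2*m) j : ℝ) := by
    intro j
    have h : (1 - PowerSeries.C (b*ε) * X : PowerSeries ℝ)
        = PowerSeries.C (-(b*ε)) * X + 1 := by
      rw [map_neg]; ring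
    rw [h, add_pow, map_sum]
    have hterm : ∀ k ∈ Finset.range (2*m+1),
        coeff j ((PowerSeries.C (-(b*ε)) * X)^k * 1^(2*m-k)
            * (Nat.choose (2*m) k : PowerSeries ℝ))
          = if j = k then (-(b*ε))^j * (Nat.choose (2*m) j : ℝ) else 0 := by
      intro k _
      rw [one_pow, mul_one, mul_pow, ← map_pow, mul_comm, ← map_natCast C,
        coeff_C_mul, coeff_C_mul, coeff_X_pow]
      split_ifs with hjk
      · subst hjk; ring
      · ring
    rw [Finset.sum_congr rfl hterm, Finset.sum_ite_eq]
    split_ifs with hj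
    · rfl
    · have hNj : 2*m < j := by
        by_contra hc
        exact hj (Finset.mem_range.mpr (by omega))
      rw [Nat.choose_eq_zero_of_lt hNj]
      simp
  -- Step 6: assemble
  set f : ℕ → ℝ := fun k =>
    coeff k ((1 - PowerSeries.C (b*ε) * X)^(2*m)) * coeff (2*m+2-k) g with hf
  have step1 : coeff (2 * m + 2)
      ((1 - PowerSeries.C (b * ε) * PowerSeries.X) ^ (2 * m) * g)
      = ∑ k ∈ Finset.range (2*m+2+1), f k := by
    rw [coeff_mul, Finset.Nat.sum_antidiagonal_eq_sum_range_succ_mk]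
  set S : Finset ℕ := (Finset.Icc 1 (m+1)).image (fun n => 2*m+2-2*n) with hS
  have hsub : S ⊆ Finset.range (2*m+2+1) := by
    intro j hj
    rw [hS, Finset.mem_image] at hj
    obtain ⟨n, hn, rfl⟩ := hj
    rw [Finset.mem_Icc] at hn
    exact Finset.mem_range.mpr (by omega)
  have hz : ∀ k ∈ Finset.range (2*m+2+1), k ∉ S → f k = 0 := by
    intro k hk hkS
    rw [Finset.mem_range] at hk
    rcases Nat.even_or_odd k with ⟨l, hl⟩ | ⟨l, hl⟩
    · -- k even, k = l + l
      by_cases hl1 : l ≤ m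
      ·
        exfalso
        apply hkS
        rw [hS, Finset.mem_image]
        exact ⟨m+1-l, Finset.mem_Icc.mpr ⟨by omega, by omega⟩, by omega⟩
      · -- l = m+1, k = 2m+2
        have hk2 : k = 2*m+2 := by omega
        rw [hf]
        simp only
        rw [cP, hk2, Nat.choose_eq_zero_of_lt (by omega)]
        simp
    · -- k odd
      have hlm : l ≤ m := by omega
      have he : 2*m+2-k = 2*(m-l)+1 := by omega
      rw [hf]
      simp only
      rw [he, aodd (m-l), mul_zero]
  have hinj : ∀ x ∈ Finset.Icc 1 (m+1), ∀ y ∈ Finset.Icc 1 (m+1),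
      2*m+2-2*x = 2*m+2-2*y → x = y := by
    intro x hx y hy hxy
    rw [Finset.mem_Icc] at hx hy
    omega
  have step2 : ∑ k ∈ Finset.range (2*m+2+1), f k
      = ∑ n ∈ Finset.Icc 1 (m+1), f (2*m+2-2*n) := by
    rw [← Finset.sum_subset hsub (fun x hx hxs => hz x hx hxs), hS,
      Finset.sum_image hinj]
  rw [step1, step2]
  have hrhs : -2 * (b ^ (2 * m + 2) / 2 *
      ∑ n ∈ Finset.Icc 1 (m + 1),
        ε ^ (2 * m + 2 - 2 * n) * (Nat.factorial (2 * m) : ℝ) /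
          ((Nat.factorial n : ℝ) * (Nat.factorial (2 * m + 2 - 2 * n) : ℝ) *
            (Nat.factorial (n - 1) : ℝ) * 2 ^ (2 * n - 1)))
      = ∑ n ∈ Finset.Icc 1 (m + 1), (-(b ^ (2*m+2))) *
          (ε ^ (2 * m + 2 - 2 * n) * (Nat.factorial (2 * m) : ℝ) /
            ((Nat.factorial n : ℝ) * (Nat.factorial (2 * m + 2 - 2 * n) : ℝ) *
              (Nat.factorial (n - 1) : ℝ) * 2 ^ (2 * n - 1))) := by
    rw [← Finset.mul_sum]
    ring
  rw [hrhs]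
  apply Finset.sum_congr rfl
  intro n hn
  rw [Finset.mem_Icc] at hn
  obtain ⟨hn1, hn2⟩ := hn
  rw [hf]
  simp only
  have e1 : 2*m+2-(2*m+2-2*n) = 2*n := by omega
  rw [e1, cP, aeven n hn1]
  have heven : Even (2*m+2-2*n) := ⟨m+1-n, by omega⟩
  rw [heven.neg_pow]
  have hle : 2*m+2-2*n ≤ 2*m := by omega
  rw [Nat.cast_choose ℝ hle]
  have e2 : 2*m - (2*m+2-2*n) = 2*n-2 := by omega
  rw [e2]
  have hbe : (b*ε)^(2*m+2-2*n) = b^(2*m+2-2*n) * ε^(2*m+2-2*n) := mul_pow b ε _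
  rw [hbe]
  have hbb : b^(2*m+2-2*n) * b^(2*n) = b^(2*m+2) := by
    rw [← pow_add]
    congr 1
    omega
  have hf1 : (Nat.factorial (2*m) : ℝ) ≠ 0 := Nat.cast_ne_zero.mpr (Nat.factorial_ne_zero _)
  have hf2 : (Nat.factorial (2*m+2-2*n) : ℝ) ≠ 0 :=
    Nat.cast_ne_zero.mpr (Nat.factorial_ne_zero _)
  have hf3 : (Nat.factorial (2*n-2) : ℝ) ≠ 0 := Nat.cast_ne_zero.mpr (Nat.factorial_ne_zero _)
  have hf4 : (Nat.factorial (n-1) : ℝ) ≠ 0 := Nat.cast_ne_zero.mpr (Nat.factorial_ne_zero _)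
  have hf5 : (Nat.factorial n : ℝ) ≠ 0 := Nat.cast_ne_zero.mpr (Nat.factorial_ne_zero _)
  have hpw : (2:ℝ)^(2*n-1) ≠ 0 := by positivity
  rw [← hbb]
  field_simp
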